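/- arXiv:2207.01249 — 4 statements merged into one kernel-verified Lean document; each statement's English description precedes it below -/
import Mathlib

section
/- Consider the adaptive deformation controller closed-loop system. Let e, θ̂ : ℝ → ℝ^m be differentiable trajectories satisfying, for all t ≥ 0, the closed-loop error dynamics e'(t) = −J(θ) · K_s · J(θ̂(t))ᵀ · e(t) and the parameter update law θ̂'(t) = −Γ⁻¹ · Y(e(t), θ̂(t))ᵀ · e(t). Assume further that the function t ↦ e(t)ᵀ · J(θ̂(t)) · K_s · J(θ̂(t))ᵀ · e(t) is uniformly continuous on [0, ∞). Then J(θ̂(t))ᵀ · e(t) → 0 as t → ∞. -/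
open Matrix Filter Topology

/-- Deformation Jacobian `J(θ) = diag(θ) · C`. -/
noncomputable def defJac {m k : ℕ} (C : Matrix (Fin m) (Fin (3*k)) ℝ) (θ : Fin m → ℝ) :
    Matrix (Fin m) (Fin (3*k)) ℝ :=
  Matrix.diagonal θ * C

/-- Regression matrix `Y(e, θ̂) = diag((C Kₛ Cᵀ diag(θ̂)) ·ᵥ e)`. -/
noncomputable def regY {m k : ℕ} (C : Matrix (Fin m) (Fin (3*k)) ℝ)
    (Ks : Matrix (Fin (3*k)) (Fin (3*k)) ℝ) (e θh : Fin m → ℝ) :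
    Matrix (Fin m) (Fin m) ℝ :=
  Matrix.diagonal ((C * Ks * Cᵀ * Matrix.diagonal θh) *ᵥ e)

lemma quad_eq {m n : ℕ} (A : Matrix (Fin m) (Fin n) ℝ) (Ks : Matrix (Fin n) (Fin n) ℝ)
    (e : Fin m → ℝ) :
    e ⬝ᵥ ((A * Ks * Aᵀ) *ᵥ e) = (Aᵀ *ᵥ e) ⬝ᵥ (Ks *ᵥ (Aᵀ *ᵥ e)) := by
  rw [← Matrix.mulVec_mulVec, ← Matrix.mulVec_mulVec, Matrix.dotProduct_mulVec,
    ← Matrix.mulVec_transpose, Matrix.dotProduct_mulVec, ← Matrix.mulVec_transpose]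

lemma key_alg {m k : ℕ} (C : Matrix (Fin m) (Fin (3*k)) ℝ)
    (Ks : Matrix (Fin (3*k)) (Fin (3*k)) ℝ) (θ θh e : Fin m → ℝ) :
    e ⬝ᵥ ((defJac C θ * Ks * (defJac C θh)ᵀ) *ᵥ e)
      + (θh - θ) ⬝ᵥ ((regY C Ks e θh)ᵀ *ᵥ e)
    = e ⬝ᵥ ((defJac C θh * Ks * (defJac C θh)ᵀ) *ᵥ e) := by
  have hT : (defJac C θh)ᵀ = Cᵀ * Matrix.diagonal θh := by
    simp [defJac, Matrix.transpose_mul, Matrix.diagonal_transpose]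
  set w : Fin m → ℝ := (C * Ks * Cᵀ * Matrix.diagonal θh) *ᵥ e with hw
  have h1 : ∀ (v : Fin m → ℝ), (defJac C v * Ks * (defJac C θh)ᵀ) *ᵥ e
      = (Matrix.diagonal v) *ᵥ w := by
    intro v
    rw [hT, hw, defJac,
      show Matrix.diagonal v * C * Ks * (Cᵀ * Matrix.diagonal θh)
          = Matrix.diagonal v * (C * Ks * Cᵀ * Matrix.diagonal θh) from by
        simp [Matrix.mul_assoc],
      ← Matrix.mulVec_mulVec]
  have h2 : (regY C Ks e θh)ᵀ *ᵥ e = fun i => w i * e i := by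
    funext i
    rw [regY, Matrix.diagonal_transpose, Matrix.mulVec_diagonal]
  rw [h1, h1, h2]
  simp only [dotProduct, Matrix.mulVec_diagonal, Pi.sub_apply]
  rw [← Finset.sum_add_distrib]
  exact Finset.sum_congr rfl fun i _ => by ring

lemma quad_lower {n : ℕ} (hn : 0 < n) (Ks : Matrix (Fin n) (Fin n) ℝ) (hKs : Ks.PosDef) :
    ∃ c > (0:ℝ), ∀ x : EuclideanSpace ℝ (Fin n), c * ‖x‖^2 ≤ x ⬝ᵥ (Ks *ᵥ x) := by
  haveI : Nonempty (Fin n) := ⟨⟨0, hn⟩⟩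
  have hcoord : ∀ i, Continuous fun x : EuclideanSpace ℝ (Fin n) => x i :=
    fun i => (EuclideanSpace.proj (𝕜 := ℝ) i).continuous
  have hq : Continuous fun x : EuclideanSpace ℝ (Fin n) => x ⬝ᵥ (Ks *ᵥ x) := by
    simp only [dotProduct, Matrix.mulVec]
    exact continuous_finset_sum _ fun i _ =>
      (hcoord i).mul (continuous_finset_sum _ fun j _ => (continuous_const.mul (hcoord j)))
  obtain ⟨x0, hx0s, hmin⟩ := (isCompact_sphere (0 : EuclideanSpace ℝ (Fin n)) 1).exists_isMinOn
    (NormedSpace.sphere_nonempty.2 zero_le_one) hq.continuousOn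
  have hx0norm : ‖x0‖ = 1 := by simpa using mem_sphere_zero_iff_norm.mp hx0s
  have hx0ne : x0 ≠ 0 := by intro h; rw [h] at hx0norm; simp at hx0norm
  refine ⟨x0 ⬝ᵥ (Ks *ᵥ x0),
    by simpa using hKs.dotProduct_mulVec_pos (x := x0.ofLp) (fun h => hx0ne (WithLp.ofLp_injective 2 (h.trans (WithLp.ofLp_zero 2).symm))), ?_⟩
  intro x
  rcases eq_or_ne x 0 with rfl | hx
  · simp [dotProduct]
  · have hxn : (0:ℝ) < ‖x‖ := norm_pos_iff.2 hx
    set y : EuclideanSpace ℝ (Fin n) := ‖x‖⁻¹ • x with hy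
    have hys : y ∈ Metric.sphere (0 : EuclideanSpace ℝ (Fin n)) 1 := by
      simp [hy, norm_smul, abs_of_pos (inv_pos.2 hxn), inv_mul_cancel₀ hxn.ne']
    have hqy : x0 ⬝ᵥ (Ks *ᵥ x0) ≤ y ⬝ᵥ (Ks *ᵥ y) := hmin hys
    have hsc : y ⬝ᵥ (Ks *ᵥ y) = ‖x‖⁻¹ * ‖x‖⁻¹ * (x ⬝ᵥ (Ks *ᵥ x)) := by
      have hyy : (y : Fin n → ℝ) = ‖x‖⁻¹ • (x : Fin n → ℝ) := rfl
      rw [hyy, Matrix.mulVec_smul, smul_dotProduct, dotProduct_smul,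
        smul_eq_mul, smul_eq_mul]
      ring
    rw [hsc] at hqy
    have h3 : ‖x‖⁻¹ * ‖x‖ = 1 := inv_mul_cancel₀ hxn.ne'
    have h4 : x0 ⬝ᵥ (Ks *ᵥ x0) * ‖x‖^2 ≤ (‖x‖⁻¹ * ‖x‖⁻¹ * (x ⬝ᵥ (Ks *ᵥ x))) * ‖x‖^2 :=
      mul_le_mul_of_nonneg_right hqy (sq_nonneg _)
    have h5 : (‖x‖⁻¹ * ‖x‖⁻¹ * (x ⬝ᵥ (Ks *ᵥ x))) * ‖x‖^2 = x ⬝ᵥ (Ks *ᵥ x) := by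
      have hr : (‖x‖⁻¹ * ‖x‖⁻¹ * (x ⬝ᵥ (Ks *ᵥ x))) * ‖x‖^2
          = (x ⬝ᵥ (Ks *ᵥ x)) * (‖x‖⁻¹ * ‖x‖) * (‖x‖⁻¹ * ‖x‖) := by ring
      rw [hr, h3, mul_one, mul_one]
    linarith

lemma barbalat (V f : ℝ → ℝ)
    (hV' : ∀ t ≥ (0:ℝ), HasDerivAt V (-(f t)) t)
    (hf0 : ∀ t ≥ (0:ℝ), 0 ≤ f t)
    (hV0 : ∀ t ≥ (0:ℝ), 0 ≤ V t)
    (huc : UniformContinuousOn f (Set.Ici 0)) :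
    Tendsto f atTop (𝓝 0) := by
  by_contra hcon
  rw [Metric.tendsto_atTop] at hcon
  push_neg at hcon
  obtain ⟨ε, hε, H⟩ := hcon
  rw [Metric.uniformContinuousOn_iff] at huc
  obtain ⟨δ, hδ, hucd⟩ := huc (ε/2) (by positivity)
  -- V antitone on [0,∞)
  have hVanti : AntitoneOn V (Set.Ici 0) := by
    apply antitoneOn_of_deriv_nonpos (convex_Ici 0)
      (fun t ht => ((hV' t ht).continuousAt).continuousWithinAt)
    · intro t ht
      rw [interior_Ici] at ht
      exact ((hV' t ht.le).differentiableAt).differentiableWithinAt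
    · intro t ht
      rw [interior_Ici] at ht
      rw [(hV' t ht.le).deriv]
      linarith [hf0 t ht.le]
  -- drop lemma
  have hdrop : ∀ t ≥ (0:ℝ), ε ≤ f t → V (t + δ/2) ≤ V t - ε/2 * (δ/2) := by
    intro t ht hft
    have hstep : ∀ u ∈ Set.Icc t (t + δ/2), ε/2 ≤ f u := by
      intro u hu
      have hu0 : u ∈ Set.Ici (0:ℝ) := le_trans ht hu.1
      have hd : dist u t < δ := by
        rw [Real.dist_eq, abs_of_nonneg (by linarith [hu.1])]
        linarith [hu.2]
      have h4 := hucd u hu0 t (Set.mem_Ici.mpr ht) hd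
      rw [Real.dist_eq] at h4
      have := abs_lt.mp h4
      linarith [this.1]
    have hWd : ∀ u, 0 ≤ u → HasDerivAt (fun u => V u + ε/2 * u) (-(f u) + ε/2 * 1) u :=
      fun u hu => (hV' u hu).add ((hasDerivAt_id u).const_mul (ε/2))
    have hWanti : AntitoneOn (fun u => V u + ε/2 * u) (Set.Icc t (t + δ/2)) := by
      apply antitoneOn_of_deriv_nonpos (convex_Icc _ _)
        (fun u hu => ((hWd u (le_trans ht hu.1)).continuousAt).continuousWithinAt)
      · intro u hu
        rw [interior_Icc] at hu
        exact ((hWd u (le_trans ht hu.1.le)).differentiableAt).differentiableWithinAt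
      · intro u hu
        rw [interior_Icc] at hu
        rw [(hWd u (le_trans ht hu.1.le)).deriv]
        have := hstep u ⟨hu.1.le, hu.2.le⟩
        linarith
    have h5 := hWanti (Set.left_mem_Icc.mpr (by linarith)) (Set.right_mem_Icc.mpr (by linarith))
      (by linarith)
    simp only at h5
    linarith
  -- sequence of escape times
  choose g hg1 hg2 using H
  set s : ℕ → ℝ := fun n => Nat.rec (g 0) (fun _ p => g (p + δ/2)) n with hs
  have hs0 : ∀ n, 0 ≤ s n := by
    intro n
    induction n with
    | zero => exact le_trans le_rfl (hg1 0)
    | succ n ih =>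
      have := hg1 (s n + δ/2)
      show 0 ≤ g (s n + δ/2)
      linarith
  have hsstep : ∀ n, s n + δ/2 ≤ s (n+1) := fun n => hg1 (s n + δ/2)
  have hfs : ∀ n, ε ≤ f (s n) := by
    intro n
    have h6 := hf0 (s n) (hs0 n)
    have h7 : ε ≤ dist (f (s n)) 0 := by
      cases n with
      | zero => exact hg2 0
      | succ n => exact hg2 (s n + δ/2)
    rwa [Real.dist_eq, sub_zero, abs_of_nonneg h6] at h7
  have hm : ∀ n : ℕ, V (s n) ≤ V (s 0) - n * (ε/2 * (δ/2)) := by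
    intro n
    induction n with
    | zero => simp
    | succ n ih =>
      have h1 : V (s (n+1)) ≤ V (s n + δ/2) :=
        hVanti (Set.mem_Ici.mpr (by linarith [hs0 n])) (Set.mem_Ici.mpr (hs0 (n+1)))
          (hsstep n)
      have h2 := hdrop (s n) (hs0 n) (hfs n)
      push_cast
      linarith
  obtain ⟨n, hn⟩ := exists_nat_gt (V (s 0) / (ε/2 * (δ/2)))
  have hc : (0:ℝ) < ε/2 * (δ/2) := by positivity
  rw [div_lt_iff₀ hc] at hn
  linarith [hV0 (s n) (hs0 n), hm n]
lemma inner_dot {p : ℕ} (x y : EuclideanSpace ℝ (Fin p)) :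
    (inner ℝ x y : ℝ) = (x : Fin p → ℝ) ⬝ᵥ (y : Fin p → ℝ) := by
  simp [PiLp.inner_apply, dotProduct, mul_comm]


/-- under the closed-loop error dynamics, the adaptive parameter update law,
and uniform continuity of the Lyapunov dissipation rate on `[0, ∞)`, the transformed error
`J(θ̂(t))ᵀ e(t)` tends to `0` as `t → ∞`. -/
theorem adaptive_controller_convergence
    (m k : ℕ) (hm : 0 < m) (hk : 0 < k)
    (C : Matrix (Fin m) (Fin (3*k)) ℝ)
    (Ks : Matrix (Fin (3*k)) (Fin (3*k)) ℝ) (hKs : Ks.PosDef)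
    (Γ : ℝ) (hΓ : 0 < Γ)
    (θ : Fin m → ℝ)
    (e θh : ℝ → EuclideanSpace ℝ (Fin m))
    (hdyn : ∀ t ≥ (0:ℝ),
      HasDerivAt e (WithLp.toLp 2 (-((defJac C θ * Ks * (defJac C (θh t))ᵀ) *ᵥ e t))) t)
    (hupd : ∀ t ≥ (0:ℝ),
      HasDerivAt θh (WithLp.toLp 2 (-(Γ⁻¹ • ((regY C Ks (e t) (θh t))ᵀ *ᵥ e t)))) t)
    (huc : UniformContinuousOn
      (fun t => e t ⬝ᵥ ((defJac C (θh t) * Ks * (defJac C (θh t))ᵀ) *ᵥ e t))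
      (Set.Ici (0:ℝ))) :
    Tendsto (fun t => (WithLp.toLp 2 ((defJac C (θh t))ᵀ *ᵥ e t) : EuclideanSpace ℝ (Fin (3*k))))
      atTop (𝓝 0) := by
  set f : ℝ → ℝ :=
    fun t => e t ⬝ᵥ ((defJac C (θh t) * Ks * (defJac C (θh t))ᵀ) *ᵥ e t) with hf
  set x : ℝ → EuclideanSpace ℝ (Fin (3*k)) :=
    fun t => (WithLp.toLp 2 ((defJac C (θh t))ᵀ *ᵥ e t) : EuclideanSpace ℝ (Fin (3*k))) with hx
  have hθ'ex : ∃ θ' : EuclideanSpace ℝ (Fin m), ∀ i, θ' i = θ i := ⟨WithLp.toLp 2 θ, fun _ => rfl⟩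
  obtain ⟨θ', hθ'⟩ := hθ'ex
  have hθeq : (θ' : Fin m → ℝ) = θ := funext hθ'
  set V : ℝ → ℝ := fun t =>
    (1/2) * (inner ℝ (e t) (e t) : ℝ) + (Γ/2) * (inner ℝ (θh t - θ') (θh t - θ') : ℝ) with hV
  -- f t = quadratic form of Ks at x t
  have hfx : ∀ t, f t = (x t : Fin (3*k) → ℝ) ⬝ᵥ (Ks *ᵥ (x t : Fin (3*k) → ℝ)) :=
    fun t => quad_eq _ _ _
  -- f nonneg
  have hf0 : ∀ t, 0 ≤ f t := by
    intro t
    rw [hfx t]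
    have := hKs.posSemidef.dotProduct_mulVec_nonneg (x t).ofLp
    rwa [star_trivial] at this
  -- V nonneg
  have hV0 : ∀ t, 0 ≤ V t := by
    intro t
    have h1 : (0:ℝ) ≤ inner ℝ (e t) (e t) := real_inner_self_nonneg
    have h2 : (0:ℝ) ≤ inner ℝ (θh t - θ') (θh t - θ') := real_inner_self_nonneg
    have := hΓ
    positivity
  -- V derivative
  have hV' : ∀ t ≥ (0:ℝ), HasDerivAt V (-(f t)) t := by
    intro t ht
    have he := hdyn t ht
    have hth := (hupd t ht).sub_const θ'
    have hder := ((he.inner ℝ he).const_mul (1/2)).add ((hth.inner ℝ hth).const_mul (Γ/2))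
    have hkey := key_alg C Ks θ (θh t) (e t)
    convert hder using 1
    · rfl
    · rfl
    · rfl
    simp only [inner_sub_left, inner_sub_right, inner_dot, dotProduct_neg,
      neg_dotProduct, dotProduct_smul, smul_dotProduct, smul_eq_mul, hf, WithLp.ofLp_toLp,
      WithLp.ofLp_sub]
    rw [dotProduct_comm ((defJac C θ * Ks * (defJac C (θh t))ᵀ) *ᵥ e t) (e t),
      dotProduct_comm ((regY C Ks (e t) (θh t))ᵀ *ᵥ e t) (θh t),
      dotProduct_comm ((regY C Ks (e t) (θh t))ᵀ *ᵥ e t) (θ' : Fin m → ℝ)]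
    rw [hθeq]
    have hΓ1 : Γ * Γ⁻¹ = 1 := mul_inv_cancel₀ hΓ.ne'
    have hkey' : (θh t : Fin m → ℝ) ⬝ᵥ ((regY C Ks (e t) (θh t))ᵀ *ᵥ e t)
        - θ ⬝ᵥ ((regY C Ks (e t) (θh t))ᵀ *ᵥ e t)
        = e t ⬝ᵥ ((defJac C (θh t) * Ks * (defJac C (θh t))ᵀ) *ᵥ e t)
          - e t ⬝ᵥ ((defJac C θ * Ks * (defJac C (θh t))ᵀ) *ᵥ e t) := by
      rw [← hkey, sub_dotProduct]
      ring
    linear_combination (Γ * Γ⁻¹) * hkey'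
      + (e t ⬝ᵥ ((defJac C (θh t) * Ks * (defJac C (θh t))ᵀ) *ᵥ e t)
        - e t ⬝ᵥ ((defJac C θ * Ks * (defJac C (θh t))ᵀ) *ᵥ e t)) * hΓ1
  -- Barbalat
  have hftend : Tendsto f atTop (𝓝 0) :=
    barbalat V f hV' (fun t _ => hf0 t) (fun t _ => hV0 t) huc
  -- quadratic lower bound
  obtain ⟨c, hc, hquad⟩ := quad_lower (by omega : 0 < 3*k) Ks hKs
  have hnormsq : Tendsto (fun t => ‖x t‖^2) atTop (𝓝 0) := by
    have hb : ∀ t, ‖x t‖^2 ≤ c⁻¹ * f t := by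
      intro t
      have h1 := hquad (x t)
      rw [← hfx t] at h1
      exact (le_inv_mul_iff₀ hc).mpr h1
    have hg : Tendsto (fun t => c⁻¹ * f t) atTop (𝓝 0) := by
      have := hftend.const_mul c⁻¹
      simpa using this
    exact squeeze_zero (fun t => sq_nonneg _) hb hg
  have hnorm : Tendsto (fun t => ‖x t‖) atTop (𝓝 0) := by
    have h1 : Tendsto (fun t => Real.sqrt (‖x t‖^2)) atTop (𝓝 (Real.sqrt 0)) :=
      (Real.continuous_sqrt.tendsto 0).comp hnormsq
    simpa [Real.sqrt_sq (norm_nonneg _)] using h1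
  exact (tendsto_zero_iff_norm_tendsto_zero (E := EuclideanSpace ℝ (Fin (3*k)))).mpr hnorm
end

section
/- Along trajectories of the closed-loop system, the Lyapunov function derivative satisfies the identity V'(t) = −e(t)ᵀ · J(θ̂(t)) · K_s · J(θ̂(t))ᵀ · e(t) for all t. That is, if e, θ̂ : ℝ → ℝ^m are differentiable with e'(t) = −J(θ) · K_s · J(θ̂(t))ᵀ · e(t) and θ̂'(t) = −Γ⁻¹ · Y(e(t), θ̂(t))ᵀ · e(t), and V(t) := (1/2)‖e(t)‖² + (Γ/2)‖θ̂(t) − θ‖², then V is differentiable with V'(t) = −e(t)ᵀ · J(θ̂(t)) · K_s · J(θ̂(t))ᵀ · e(t). -/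
open Matrix Filter Topology

/-- along closed-loop trajectories, the Lyapunov function
`V(t) = ½‖e(t)‖² + (Γ/2)‖θ̂(t) − θ‖²` is differentiable with
`V'(t) = −e(t)ᵀ J(θ̂(t)) Kₛ J(θ̂(t))ᵀ e(t)`. -/
theorem lyapunov_derivative_identity
    (m k : ℕ) (hm : 0 < m) (hk : 0 < k)
    (C : Matrix (Fin m) (Fin (3*k)) ℝ)
    (Ks : Matrix (Fin (3*k)) (Fin (3*k)) ℝ) (hKs : Ksᵀ = Ks)
    (Γ : ℝ) (hΓ : 0 < Γ)
    (θ : EuclideanSpace ℝ (Fin m))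
    (e θh : ℝ → EuclideanSpace ℝ (Fin m))
    (hdyn : ∀ t : ℝ,
      HasDerivAt e (WithLp.toLp 2 (-((defJac C θ * Ks * (defJac C (θh t))ᵀ) *ᵥ e t))) t)
    (hupd : ∀ t : ℝ,
      HasDerivAt θh (WithLp.toLp 2 (-(Γ⁻¹ • ((regY C Ks (e t) (θh t))ᵀ *ᵥ e t)))) t)
    (V : ℝ → ℝ)
    (hV : V = fun t => (1/2) * ‖e t‖^2 + (Γ/2) * ‖θh t - θ‖^2) :
    ∀ t : ℝ, HasDerivAt V
      (-(e t ⬝ᵥ ((defJac C (θh t) * Ks * (defJac C (θh t))ᵀ) *ᵥ e t))) t := by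
  intro t
  have hV' : V = fun s => (1/2) * (inner ℝ (e s) (e s) : ℝ)
      + (Γ/2) * (inner ℝ (θh s - θ) (θh s - θ) : ℝ) := by
    rw [hV]; funext s
    rw [real_inner_self_eq_norm_sq, real_inner_self_eq_norm_sq]
  set e' : EuclideanSpace ℝ (Fin m) :=
    WithLp.toLp 2 (-((defJac C θ * Ks * (defJac C (θh t))ᵀ) *ᵥ e t)) with he'
  set w' : EuclideanSpace ℝ (Fin m) :=
    WithLp.toLp 2 (-(Γ⁻¹ • ((regY C Ks (e t) (θh t))ᵀ *ᵥ e t))) with hw'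
  have h1 : HasDerivAt (fun s => (inner ℝ (e s) (e s) : ℝ))
      (inner ℝ (e t) e' + inner ℝ e' (e t)) t := (hdyn t).inner ℝ (hdyn t)
  have hsub : HasDerivAt (fun s => θh s - θ) w' t := (hupd t).sub_const θ
  have h2 : HasDerivAt (fun s => (inner ℝ (θh s - θ) (θh s - θ) : ℝ))
      (inner ℝ (θh t - θ) w' + inner ℝ w' (θh t - θ)) t := hsub.inner ℝ hsub
  have hD := ((h1.const_mul (1/2 : ℝ)).add (h2.const_mul (Γ/2 : ℝ)))
  rw [hV']
  refine hD.congr_deriv ?_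
  symm
  -- scalar identity
  have hMul : ∀ (v : Fin m → ℝ) (x : EuclideanSpace ℝ (Fin m)),
      (defJac C v * Ks * (defJac C (θh t))ᵀ) *ᵥ x
        = fun i => v i * ((C * Ks * Cᵀ * Matrix.diagonal (θh t)) *ᵥ x) i := by
    intro v x
    have : defJac C v * Ks * (defJac C (θh t))ᵀ
        = Matrix.diagonal v * (C * Ks * Cᵀ * Matrix.diagonal (θh t)) := by
      simp only [defJac, Matrix.transpose_mul, Matrix.diagonal_transpose]
      simp only [Matrix.mul_assoc]
    rw [this, ← Matrix.mulVec_mulVec]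
    funext i
    simp [Matrix.mulVec_diagonal]
  set u : Fin m → ℝ := (C * Ks * Cᵀ * Matrix.diagonal (θh t)) *ᵥ e t with hu
  have hY : (regY C Ks (e t) (θh t))ᵀ *ᵥ e t = fun i => u i * e t i := by
    funext i
    simp [regY, Matrix.diagonal_transpose, Matrix.mulVec_diagonal, hu]
  have hΓ' : Γ ≠ 0 := ne_of_gt hΓ
  simp only [he', hw', hMul, hY, PiLp.inner_apply, RCLike.inner_apply, conj_trivial,
    dotProduct, PiLp.neg_apply, PiLp.smul_apply, PiLp.sub_apply, smul_eq_mul,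
    Pi.neg_apply, PiLp.toLp_apply, Pi.smul_apply, hu]
  simp only [Finset.mul_sum, ← Finset.sum_add_distrib, ← Finset.sum_neg_distrib]
  apply Finset.sum_congr rfl
  intro i _
  field_simp
  ring
end

section
/- If K_s is positive semidefinite, then along trajectories of the closed-loop system the Lyapunov function is nonincreasing: for differentiable e, θ̂ : ℝ → ℝ^m satisfying e'(t) = −J(θ) · K_s · J(θ̂(t))ᵀ · e(t) and θ̂'(t) = −Γ⁻¹ · Y(e(t), θ̂(t))ᵀ · e(t), the function V(t) := (1/2)‖e(t)‖² + (Γ/2)‖θ̂(t) − θ‖² satisfies V'(t) ≤ 0 for all t, and hence V(t) ≤ V(s) whenever s ≤ t. -/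
open Matrix Filter Topology

section aux

open RealInnerProductSpace

lemma lyap_inner_eq_dot {m : ℕ} (x y : EuclideanSpace ℝ (Fin m)) : ⟪x, y⟫ = x ⬝ᵥ y := by
  simp [PiLp.inner_apply, dotProduct, mul_comm]

lemma lyap_dot_diag {m : ℕ} (x θv w : Fin m → ℝ) :
    x ⬝ᵥ (Matrix.diagonal θv *ᵥ w) = (Matrix.diagonal θv *ᵥ x) ⬝ᵥ w := by
  simp [dotProduct, mulVec_diagonal, mul_comm, mul_left_comm]

lemma lyap_dot_shift {m n : ℕ} (C : Matrix (Fin m) (Fin n) ℝ) (x : Fin m → ℝ) (y : Fin n → ℝ) :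
    x ⬝ᵥ (C *ᵥ y) = (Cᵀ *ᵥ x) ⬝ᵥ y := by
  rw [dotProduct_mulVec, mulVec_transpose]

lemma lyap_dot_diag_sub {m : ℕ} (a b w x : Fin m → ℝ) :
    (a - b) ⬝ᵥ (Matrix.diagonal w *ᵥ x)
      = ((Matrix.diagonal a *ᵥ x) - (Matrix.diagonal b *ᵥ x)) ⬝ᵥ w := by
  simp only [dotProduct, mulVec_diagonal, Pi.sub_apply]
  exact Finset.sum_congr rfl fun i _ => by ring

/-- The key algebraic identity for the Lyapunov derivative. -/
lemma lyap_alg {m k : ℕ} (C : Matrix (Fin m) (Fin (3*k)) ℝ)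
    (Ks : Matrix (Fin (3*k)) (Fin (3*k)) ℝ) (Γ : ℝ) (hΓ : Γ ≠ 0)
    (θ θh x : EuclideanSpace ℝ (Fin m)) :
    x ⬝ᵥ (-((defJac C θ * Ks * (defJac C θh)ᵀ) *ᵥ x))
      + Γ * ((θh - θ) ⬝ᵥ (-(Γ⁻¹ • ((regY C Ks x θh)ᵀ *ᵥ x))))
      = -((Cᵀ *ᵥ (Matrix.diagonal θh *ᵥ x)) ⬝ᵥ (Ks *ᵥ (Cᵀ *ᵥ (Matrix.diagonal θh *ᵥ x)))) := by
  have h1 : x ⬝ᵥ ((defJac C θ * Ks * (defJac C θh)ᵀ) *ᵥ x)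
      = (Cᵀ *ᵥ (Matrix.diagonal θ *ᵥ x)) ⬝ᵥ (Ks *ᵥ (Cᵀ *ᵥ (Matrix.diagonal θh *ᵥ x))) := by
    have hA : (defJac C θ * Ks * (defJac C θh)ᵀ) *ᵥ x
        = Matrix.diagonal θ *ᵥ (C *ᵥ (Ks *ᵥ (Cᵀ *ᵥ (Matrix.diagonal θh *ᵥ x)))) := by
      simp [defJac, transpose_mul, diagonal_transpose, ← mulVec_mulVec, Matrix.mul_assoc]
    rw [hA, lyap_dot_diag, lyap_dot_shift]
  have h2 : (θh - θ) ⬝ᵥ ((regY C Ks x θh)ᵀ *ᵥ x)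
      = (Cᵀ *ᵥ (Matrix.diagonal θh *ᵥ x)) ⬝ᵥ (Ks *ᵥ (Cᵀ *ᵥ (Matrix.diagonal θh *ᵥ x)))
        - (Cᵀ *ᵥ (Matrix.diagonal θ *ᵥ x)) ⬝ᵥ (Ks *ᵥ (Cᵀ *ᵥ (Matrix.diagonal θh *ᵥ x))) := by
    have hY : (regY C Ks x θh)ᵀ *ᵥ x
        = Matrix.diagonal (C *ᵥ (Ks *ᵥ (Cᵀ *ᵥ (Matrix.diagonal θh *ᵥ x)))) *ᵥ x := by
      simp [regY, diagonal_transpose, ← mulVec_mulVec]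
    rw [hY, WithLp.ofLp_sub, lyap_dot_diag_sub, sub_dotProduct, lyap_dot_shift C (Matrix.diagonal θh *ᵥ x),
      lyap_dot_shift C (Matrix.diagonal θ *ᵥ x)]
  rw [dotProduct_neg, dotProduct_neg, dotProduct_smul, h1, h2, smul_eq_mul, mul_neg,
    ← mul_assoc, mul_inv_cancel₀ hΓ, one_mul]
  ring

end aux

/-- if `Kₛ` is positive semidefinite, then along closed-loop trajectories the
Lyapunov function `V(t) = ½‖e(t)‖² + (Γ/2)‖θ̂(t) − θ‖²` satisfies `V'(t) ≤ 0` for all `t`,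
and hence `V(t) ≤ V(s)` whenever `s ≤ t`. -/
theorem lyapunov_nonincreasing
    (m k : ℕ) (hm : 0 < m) (hk : 0 < k)
    (C : Matrix (Fin m) (Fin (3*k)) ℝ)
    (Ks : Matrix (Fin (3*k)) (Fin (3*k)) ℝ) (hKs : Ks.PosSemidef)
    (Γ : ℝ) (hΓ : 0 < Γ)
    (θ : EuclideanSpace ℝ (Fin m))
    (e θh : ℝ → EuclideanSpace ℝ (Fin m))
    (hdyn : ∀ t : ℝ,
      HasDerivAt e (WithLp.toLp 2 (-((defJac C θ * Ks * (defJac C (θh t))ᵀ) *ᵥ e t))) t)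
    (hupd : ∀ t : ℝ,
      HasDerivAt θh (WithLp.toLp 2 (-(Γ⁻¹ • ((regY C Ks (e t) (θh t))ᵀ *ᵥ e t)))) t)
    (V : ℝ → ℝ)
    (hV : V = fun t => (1/2) * ‖e t‖^2 + (Γ/2) * ‖θh t - θ‖^2) :
    (∀ t : ℝ, deriv V t ≤ 0) ∧ ∀ s t : ℝ, s ≤ t → V t ≤ V s := by
  open RealInnerProductSpace in
  have hVD : ∀ t : ℝ, HasDerivAt V
      (-((Cᵀ *ᵥ (Matrix.diagonal (θh t) *ᵥ e t)) ⬝ᵥ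
        (Ks *ᵥ (Cᵀ *ᵥ (Matrix.diagonal (θh t) *ᵥ e t))))) t := by
    intro t
    have h1 := (hdyn t).inner ℝ (hdyn t)
    have hsub := (hupd t).sub_const θ
    have h2 := hsub.inner ℝ hsub
    have hVeq : V = fun s => (1/2) * ⟪e s, e s⟫ + (Γ/2) * ⟪θh s - θ, θh s - θ⟫ := by
      rw [hV]; funext s
      rw [real_inner_self_eq_norm_sq, real_inner_self_eq_norm_sq]
    have hcomb := (h1.const_mul ((1:ℝ)/2)).add (h2.const_mul (Γ/2))
    rw [hVeq]
    refine hcomb.congr_deriv ?_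
    have key := lyap_alg C Ks Γ hΓ.ne' θ (θh t) (e t)
    simp only [lyap_inner_eq_dot, WithLp.ofLp_toLp, dotProduct_comm] at key ⊢
    linarith [key]
  have hdiff : Differentiable ℝ V := fun t => (hVD t).differentiableAt
  have hderiv : ∀ t, deriv V t ≤ 0 := by
    intro t
    rw [(hVD t).deriv]
    have h0 : 0 ≤ (Cᵀ *ᵥ (Matrix.diagonal (θh t) *ᵥ e t)) ⬝ᵥ
        (Ks *ᵥ (Cᵀ *ᵥ (Matrix.diagonal (θh t) *ᵥ e t))) := by
      have := hKs.dotProduct_mulVec_nonneg (Cᵀ *ᵥ (Matrix.diagonal (θh t) *ᵥ e t)); simpa using this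
    linarith
  exact ⟨hderiv, fun s t hst => antitone_of_deriv_nonpos hdiff hderiv hst⟩
end

section
/- The accumulated Lyapunov dissipation is bounded by the initial energy: if e, θ̂ : ℝ → ℝ^m are differentiable and satisfy e'(t) = −J(θ) · K_s · J(θ̂(t))ᵀ · e(t) and θ̂'(t) = −Γ⁻¹ · Y(e(t), θ̂(t))ᵀ · e(t) for all t ≥ 0, then for every T ≥ 0 the integral ∫₀ᵀ e(t)ᵀ · J(θ̂(t)) · K_s · J(θ̂(t))ᵀ · e(t) dt equals V(0) − V(T), and in particular (when K_s is positive semidefinite) is at most V(0), where V(t) := (1/2)‖e(t)‖² + (Γ/2)‖θ̂(t) − θ‖². -/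
open Matrix Filter Topology

lemma defJac_prod {m k : ℕ} (C : Matrix (Fin m) (Fin (3*k)) ℝ)
    (Ks : Matrix (Fin (3*k)) (Fin (3*k)) ℝ) (a b : Fin m → ℝ) :
    defJac C a * Ks * (defJac C b)ᵀ
      = Matrix.diagonal a * (C * Ks * Cᵀ * Matrix.diagonal b) := by
  simp [defJac, Matrix.transpose_mul, Matrix.mul_assoc]

lemma lyap_deriv (m k : ℕ) (C : Matrix (Fin m) (Fin (3*k)) ℝ)
    (Ks : Matrix (Fin (3*k)) (Fin (3*k)) ℝ)
    (Γ : ℝ) (hΓ : 0 < Γ)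
    (θ : EuclideanSpace ℝ (Fin m))
    (e θh : ℝ → EuclideanSpace ℝ (Fin m))
    (t : ℝ)
    (he : HasDerivAt e (WithLp.toLp 2 (-((defJac C θ * Ks * (defJac C (θh t))ᵀ) *ᵥ e t))) t)
    (hth : HasDerivAt θh (WithLp.toLp 2 (-(Γ⁻¹ • ((regY C Ks (e t) (θh t))ᵀ *ᵥ e t)))) t) :
    HasDerivAt (fun s => (1/2) * ‖e s‖^2 + (Γ/2) * ‖θh s - θ‖^2)
      (-(e t ⬝ᵥ ((defJac C (θh t) * Ks * (defJac C (θh t))ᵀ) *ᵥ e t))) t := by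
  have hfun : (fun s => (1/2) * ‖e s‖^2 + (Γ/2) * ‖θh s - θ‖^2)
      = fun s => (1/2) * (inner ℝ (e s) (e s) : ℝ) + (Γ/2) * (inner ℝ (θh s - θ) (θh s - θ) : ℝ) := by
    funext s; rw [real_inner_self_eq_norm_sq, real_inner_self_eq_norm_sq]
  rw [hfun]
  have h1 := (he.inner ℝ he).const_mul ((1:ℝ)/2)
  have h2 := (((hth.sub_const θ).inner ℝ (hth.sub_const θ)).const_mul (Γ/2))
  have := h1.add h2
  refine this.congr_deriv ?_
  symm
  simp only [PiLp.inner_apply, RCLike.inner_apply, conj_trivial, defJac_prod, regY,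
    Matrix.diagonal_transpose, dotProduct, ← Matrix.mulVec_mulVec, Matrix.mulVec_diagonal,
    PiLp.sub_apply, PiLp.neg_apply, PiLp.smul_apply, Pi.neg_apply, Pi.smul_apply, smul_eq_mul]
  simp only [Finset.mul_sum, ← Finset.sum_add_distrib, ← Finset.sum_neg_distrib]
  apply Finset.sum_congr rfl
  intro i _
  have hΓ' : Γ ≠ 0 := ne_of_gt hΓ
  field_simp
  ring

/-- the accumulated Lyapunov dissipation over `[0, T]` equals `V(0) − V(T)`,
and when `Kₛ` is positive semidefinite it is at most `V(0)`. -/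
theorem accumulated_dissipation_bound
    (m k : ℕ) (hm : 0 < m) (hk : 0 < k)
    (C : Matrix (Fin m) (Fin (3*k)) ℝ)
    (Ks : Matrix (Fin (3*k)) (Fin (3*k)) ℝ) (hKs : Ksᵀ = Ks)
    (Γ : ℝ) (hΓ : 0 < Γ)
    (θ : EuclideanSpace ℝ (Fin m))
    (e θh : ℝ → EuclideanSpace ℝ (Fin m))
    (hdyn : ∀ t ≥ (0:ℝ),
      HasDerivAt e (WithLp.toLp 2 (-((defJac C θ * Ks * (defJac C (θh t))ᵀ) *ᵥ e t))) t)
    (hupd : ∀ t ≥ (0:ℝ),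
      HasDerivAt θh (WithLp.toLp 2 (-(Γ⁻¹ • ((regY C Ks (e t) (θh t))ᵀ *ᵥ e t)))) t)
    (V : ℝ → ℝ)
    (hV : V = fun t => (1/2) * ‖e t‖^2 + (Γ/2) * ‖θh t - θ‖^2) :
    ∀ T ≥ (0:ℝ),
      (∫ t in (0:ℝ)..T,
          e t ⬝ᵥ ((defJac C (θh t) * Ks * (defJac C (θh t))ᵀ) *ᵥ e t)) = V 0 - V T ∧
      (Ks.PosSemidef →
        (∫ t in (0:ℝ)..T,
            e t ⬝ᵥ ((defJac C (θh t) * Ks * (defJac C (θh t))ᵀ) *ᵥ e t)) ≤ V 0) := by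
  intro T hT
  have huIcc : Set.uIcc (0:ℝ) T = Set.Icc 0 T := Set.uIcc_of_le hT
  have hmem : ∀ t ∈ Set.uIcc (0:ℝ) T, (0:ℝ) ≤ t := by
    intro t ht; rw [huIcc] at ht; exact ht.1
  -- continuity of e and θh on the interval
  have hce : ContinuousOn e (Set.uIcc (0:ℝ) T) := fun t ht =>
    (hdyn t (hmem t ht)).continuousAt.continuousWithinAt
  have hcθ : ContinuousOn θh (Set.uIcc (0:ℝ) T) := fun t ht =>
    (hupd t (hmem t ht)).continuousAt.continuousWithinAt
  have hgc : Continuous (fun p : EuclideanSpace ℝ (Fin m) × EuclideanSpace ℝ (Fin m) =>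
      p.1 ⬝ᵥ ((defJac C p.2 * Ks * (defJac C p.2)ᵀ) *ᵥ p.1)) := by
    have hp1 : Continuous (fun p : EuclideanSpace ℝ (Fin m) × EuclideanSpace ℝ (Fin m) =>
        (p.1 : Fin m → ℝ)) := (PiLp.continuous_ofLp 2 _).comp continuous_fst
    have hp2 : Continuous (fun p : EuclideanSpace ℝ (Fin m) × EuclideanSpace ℝ (Fin m) =>
        (p.2 : Fin m → ℝ)) := (PiLp.continuous_ofLp 2 _).comp continuous_snd
    have hJ : Continuous (fun p : EuclideanSpace ℝ (Fin m) × EuclideanSpace ℝ (Fin m) =>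
        defJac C p.2) := by
      simp only [defJac]
      exact hp2.matrix_diagonal.matrix_mul continuous_const
    have hM : Continuous (fun p : EuclideanSpace ℝ (Fin m) × EuclideanSpace ℝ (Fin m) =>
        defJac C p.2 * Ks * (defJac C p.2)ᵀ) :=
      (hJ.matrix_mul continuous_const).matrix_mul hJ.matrix_transpose
    exact hp1.dotProduct (hM.matrix_mulVec hp1)
  have hDc : ContinuousOn (fun t =>
      e t ⬝ᵥ ((defJac C (θh t) * Ks * (defJac C (θh t))ᵀ) *ᵥ e t)) (Set.uIcc (0:ℝ) T) :=
    hgc.comp_continuousOn (hce.prodMk hcθ)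
  have hkey : ∀ t ∈ Set.uIcc (0:ℝ) T, HasDerivAt V
      (-(e t ⬝ᵥ ((defJac C (θh t) * Ks * (defJac C (θh t))ᵀ) *ᵥ e t))) t := by
    intro t ht
    rw [hV]
    exact lyap_deriv m k C Ks Γ hΓ θ e θh t (hdyn t (hmem t ht)) (hupd t (hmem t ht))
  have hint : IntervalIntegrable (fun t =>
      -(e t ⬝ᵥ ((defJac C (θh t) * Ks * (defJac C (θh t))ᵀ) *ᵥ e t))) MeasureTheory.volume 0 T :=
    hDc.neg.intervalIntegrable
  have hftc := intervalIntegral.integral_eq_sub_of_hasDerivAt hkey hint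
  rw [intervalIntegral.integral_neg] at hftc
  have heq : (∫ t in (0:ℝ)..T,
      e t ⬝ᵥ ((defJac C (θh t) * Ks * (defJac C (θh t))ᵀ) *ᵥ e t)) = V 0 - V T := by
    linarith [hftc]
  refine ⟨heq, fun _ => ?_⟩
  have hVT : 0 ≤ V T := by rw [hV]; positivity
  linarith
end
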